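/- For every character c, if the SA interval I(c) of the one-character string c equals a nonempty interval [b..e], then case (A) does not hold for [b..e]; consequently, whenever case (A) holds for the SA interval of a substring P of T, the length of P is at least 2. -/

import Mathlib

/-- The suffix `T[i..n]` of a 1-indexed string of length `n` (as a list). -/
def suffix {α : Type*} (T : ℕ → α) (n i : ℕ) : List α :=
  (List.range' i (n + 1 - i)).map T

/-- `rank(L,c,i)`: the number of occurrences of the character `c` in `L[1..i]`. -/
def rankL {α : Type*} [DecidableEq α] (L : ℕ → α) (c : α) (i : ℕ) : ℕ :=
  ((Finset.Icc 1 i).filter (fun j => L j = c)).card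

/-- `C[c]`: the number of positions `j ∈ [1..n]` with `L[j]` strictly smaller than `c`. -/
def Cc {α : Type*} [LinearOrder α] (L : ℕ → α) (n : ℕ) (c : α) : ℕ :=
  ((Finset.Icc 1 n).filter (fun j => L j < c)).card

/-- `LF(i) = C[L[i]] + rank(L, L[i], i)`. -/
def LF {α : Type*} [LinearOrder α] (L : ℕ → α) (n i : ℕ) : ℕ :=
  Cc L n (L i) + rankL L (L i) i

/-- The SA interval of a nonempty string `Y`:
`I(Y) = {i ∈ [1..n] : Y is a prefix of T[SA[i]..]}`. -/
def SAIv {α : Type*} (T : ℕ → α) (SA : ℕ → ℕ) (n : ℕ) (Y : List α) : Set ℕ :=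
  {i | 1 ≤ i ∧ i ≤ n ∧ Y <+: suffix T n (SA i)}

/-- The substring `T[x..x+l-1]` of a 1-indexed string, as a list. -/
def substr {α : Type*} (T : ℕ → α) (x l : ℕ) : List α :=
  (List.range' x l).map T

/-- Case (A) holds for an interval `[b..e]` if there exists `i ∈ [1..r]` with
`Z[i] < b` and `e < Z[i+1] − 1`. -/
def CaseA (Z : ℕ → ℕ) (r b e : ℕ) : Prop :=
  ∃ i, 1 ≤ i ∧ i ≤ r ∧ Z i < b ∧ e < Z (i + 1) - 1

private lemma lex_head_le {α : Type*} [LinearOrder α] {a b : α} {l1 l2 : List α}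
    (h : List.Lex (· < ·) (a :: l1) (b :: l2)) : a ≤ b := by
  cases h with
  | rel h => exact h.le
  | cons h => exact le_rfl

private lemma card_filter_comp {n : ℕ} {g : ℕ → ℕ}
    (hg : Set.BijOn g (Set.Icc 1 n) (Set.Icc 1 n))
    (q : ℕ → Prop) [DecidablePred q] :
    ((Finset.Icc 1 n).filter (fun j => q (g j))).card =
      ((Finset.Icc 1 n).filter q).card := by
  apply Finset.card_nbij g
  · intro a ha
    simp only [Finset.coe_filter, Set.mem_setOf_eq, Finset.mem_coe, Finset.mem_filter, Finset.mem_Icc] at ha ⊢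
    refine ⟨?_, ha.2⟩
    have := hg.mapsTo (Set.mem_Icc.2 ⟨ha.1.1, ha.1.2⟩)
    simpa [Set.mem_Icc] using this
  · refine hg.injOn.mono ?_
    intro x hx
    simp only [Finset.coe_filter, Set.mem_setOf_eq, Finset.mem_Icc] at hx
    exact Set.mem_Icc.2 ⟨hx.1.1, hx.1.2⟩
  · intro b hb
    simp only [Finset.coe_filter, Set.mem_setOf_eq, Finset.mem_Icc] at hb
    obtain ⟨a, haIcc, rfl⟩ := hg.surjOn (Set.mem_Icc.2 ⟨hb.1.1, hb.1.2⟩)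
    refine ⟨a, ?_, rfl⟩
    simp only [Finset.coe_filter, Set.mem_setOf_eq, Finset.mem_Icc]
    rw [Set.mem_Icc] at haIcc
    exact ⟨⟨haIcc.1, haIcc.2⟩, hb.2⟩

/-- For every character `c`, if the SA interval of the one-character string `c`
equals a nonempty interval `[b..e]`, then case (A) does not hold for `[b..e]`;
consequently, whenever case (A) holds for the SA interval of a substring `P` of
`T`, the length of `P` is at least `2`. -/
theorem stmt7 {α : Type*} [LinearOrder α] (n : ℕ) (hn : 1 ≤ n)
    (T : ℕ → α) (SA : ℕ → ℕ) (L : ℕ → α)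
    (hlast : ∀ i, 1 ≤ i → i < n → T n < T i)
    (hSAbij : Set.BijOn SA (Set.Icc 1 n) (Set.Icc 1 n))
    (hSAsorted : ∀ i j, 1 ≤ i → i < j → j ≤ n →
      List.Lex (· < ·) (suffix T n (SA i)) (suffix T n (SA j)))
    (hL : ∀ i, 1 ≤ i → i ≤ n → L i = if SA i = 1 then T n else T (SA i - 1))
    -- the run-length encoding `L_1, …, L_r` of `L`: run `L_m` starts at `p m`
    -- and has length `len m`
    (r : ℕ) (p len : ℕ → ℕ) (hr : 1 ≤ r)
    (hp1 : p 1 = 1) (hpend : p (r + 1) = n + 1)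
    (hpsucc : ∀ m, 1 ≤ m → m ≤ r → p (m + 1) = p m + len m)
    (hlen : ∀ m, 1 ≤ m → m ≤ r → 1 ≤ len m)
    (hrunconst : ∀ m, 1 ≤ m → m ≤ r → ∀ j, p m ≤ j → j < p (m + 1) → L j = L (p m))
    (hrunmax : ∀ m, 1 ≤ m → m < r → L (p m) ≠ L (p (m + 1)))
    -- `X` is the permutation of `[1..r]` sorting the runs by `LF(p(·))`
    (X : ℕ → ℕ)
    (hXbij : Set.BijOn X (Set.Icc 1 r) (Set.Icc 1 r))
    (hXsorted : ∀ i j, 1 ≤ i → i < j → j ≤ r → LF L n (p (X i)) < LF L n (p (X j)))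
    -- `Z[i] = LF(p(X[i]))` for `i ∈ [1..r]`, and `Z[r+1] = n+1`
    (Z : ℕ → ℕ)
    (hZ : ∀ i, 1 ≤ i → i ≤ r → Z i = LF L n (p (X i)))
    (hZend : Z (r + 1) = n + 1)
    :
    (∀ (c : α) (b e : ℕ), SAIv T SA n [c] = Set.Icc b e → b ≤ e →
      ¬ CaseA Z r b e) ∧
    (∀ (P : List α) (x b e : ℕ), P ≠ [] → 1 ≤ x → x + P.length ≤ n + 1 →
      P = substr T x P.length → SAIv T SA n P = Set.Icc b e → b ≤ e →
      CaseA Z r b e → 2 ≤ P.length) := by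
  -- SA membership
  have hSAmem : ∀ j, 1 ≤ j → j ≤ n → 1 ≤ SA j ∧ SA j ≤ n := by
    intro j h1 h2
    have := hSAbij.mapsTo (Set.mem_Icc.2 ⟨h1, h2⟩)
    simpa [Set.mem_Icc] using this
  -- suffix as cons
  have hsuffix_cons : ∀ k, 1 ≤ k → k ≤ n →
      suffix T n k = T k :: (List.range' (k+1) (n - k)).map T := by
    intro k h1 h2
    unfold suffix
    have h3 : n + 1 - k = (n - k) + 1 := by omega
    rw [h3, List.range'_succ]
    simp
  -- prefix characterization
  have hprefix_iff : ∀ j (c : α), 1 ≤ j → j ≤ n →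
      ([c] <+: suffix T n (SA j) ↔ T (SA j) = c) := by
    intro j c h1 h2
    obtain ⟨hs1, hs2⟩ := hSAmem j h1 h2
    rw [hsuffix_cons (SA j) hs1 hs2]
    constructor
    · rintro ⟨t, ht⟩
      simp only [List.singleton_append, List.cons.injEq] at ht
      exact ht.1.symm
    · intro h
      exact ⟨_, by rw [h]; rfl⟩
  -- monotonicity of first characters
  have hmono : ∀ i j, 1 ≤ i → i ≤ j → j ≤ n → T (SA i) ≤ T (SA j) := by
    intro i j h1 h2 h3
    rcases eq_or_lt_of_le h2 with h | h
    · rw [h]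
    · have hlex := hSAsorted i j h1 h h3
      obtain ⟨hi1, hi2⟩ := hSAmem i h1 (le_trans h2 h3)
      obtain ⟨hj1, hj2⟩ := hSAmem j (by omega) h3
      rw [hsuffix_cons (SA i) hi1 hi2, hsuffix_cons (SA j) hj1 hj2] at hlex
      exact lex_head_le hlex
  -- the bijection k ↦ previous position (BWT source map)
  set g : ℕ → ℕ := fun k => if k = 1 then n else k - 1 with hgdef
  have hgbij : Set.BijOn g (Set.Icc 1 n) (Set.Icc 1 n) := by
    refine ⟨?_, ?_, ?_⟩
    · intro k hk
      rw [Set.mem_Icc] at hk ⊢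
      simp only [hgdef]
      split_ifs <;> omega
    · intro a ha b hb h
      rw [Set.mem_Icc] at ha hb
      simp only [hgdef] at h
      split_ifs at h <;> omega
    · intro m hm
      rw [Set.mem_Icc] at hm
      refine ⟨if m = n then 1 else m + 1, ?_, ?_⟩
      · rw [Set.mem_Icc]; split_ifs <;> omega
      · simp only [hgdef]; split_ifs <;> omega
  have hgSA : Set.BijOn (g ∘ SA) (Set.Icc 1 n) (Set.Icc 1 n) := hgbij.comp hSAbij
  have hLg : ∀ j, 1 ≤ j → j ≤ n → L j = T (g (SA j)) := by
    intro j h1 h2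
    rw [hL j h1 h2]
    simp only [hgdef]
    rw [apply_ite T]
  -- counting transfers
  have hL_lt : ∀ c : α, Cc L n c = ((Finset.Icc 1 n).filter (fun k => T k < c)).card := by
    intro c
    rw [Cc, ← card_filter_comp hgSA (fun k => T k < c)]
    congr 1
    apply Finset.filter_congr
    intro j hj
    rw [Finset.mem_Icc] at hj
    rw [hLg j hj.1 hj.2]
    exact Iff.rfl
  have hrank_mono : ∀ (c : α) j j', j ≤ j' → rankL L c j ≤ rankL L c j' := by
    intro c j j' h
    apply Finset.card_le_card
    exact Finset.filter_subset_filter _ (Finset.Icc_subset_Icc_right h)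
  have hrank_pos : ∀ j, 1 ≤ j → 1 ≤ rankL L (L j) j := by
    intro j h1
    rw [rankL, Nat.one_le_iff_ne_zero, ← Nat.pos_iff_ne_zero, Finset.card_pos]
    exact ⟨j, Finset.mem_filter.2 ⟨Finset.mem_Icc.2 ⟨h1, le_rfl⟩, rfl⟩⟩
  have hle_split : ∀ c : α, ((Finset.Icc 1 n).filter (fun j => L j ≤ c)).card =
      Cc L n c + rankL L c n := by
    intro c
    rw [Cc, rankL, ← Finset.card_union_of_disjoint]
    · congr 1
      ext j
      simp only [Finset.mem_union, Finset.mem_filter]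
      constructor
      · rintro ⟨hj, h⟩
        rcases lt_or_eq_of_le h with h | h
        · exact Or.inl ⟨hj, h⟩
        · exact Or.inr ⟨hj, h⟩
      · rintro (⟨hj, h⟩ | ⟨hj, h⟩)
        exacts [⟨hj, h.le⟩, ⟨hj, h.le⟩]
    · rw [Finset.disjoint_left]
      intro a ha hb
      rw [Finset.mem_filter] at ha hb
      exact absurd hb.2 (ne_of_lt ha.2)
  have hL_le : ∀ c : α, ((Finset.Icc 1 n).filter (fun k => T k ≤ c)).card =
      Cc L n c + rankL L c n := by
    intro c
    rw [← hle_split c]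
    rw [← card_filter_comp hgSA (fun k => T k ≤ c)]
    congr 1
    symm
    apply Finset.filter_congr
    intro j hj
    rw [Finset.mem_Icc] at hj
    rw [hLg j hj.1 hj.2]
    exact Iff.rfl
  have hLF_pos : ∀ j, 1 ≤ j → 1 ≤ LF L n j := by
    intro j h1
    exact le_trans (hrank_pos j h1) (Nat.le_add_left _ _)
  have hLF_le : ∀ j, 1 ≤ j → j ≤ n → LF L n j ≤ n := by
    intro j h1 h2
    have h3 : rankL L (L j) j ≤ rankL L (L j) n := hrank_mono _ _ _ h2
    have h4 : Cc L n (L j) + rankL L (L j) n ≤ n := by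
      rw [← hle_split]
      calc ((Finset.Icc 1 n).filter (fun i => L i ≤ L j)).card
          ≤ (Finset.Icc 1 n).card := Finset.card_filter_le _ _
        _ = n := by rw [Nat.card_Icc]; omega
    unfold LF
    omega
  have hCc_le : ∀ c c' : α, c < c' → Cc L n c + rankL L c n ≤ Cc L n c' := by
    intro c c' h
    rw [← hle_split, Cc]
    apply Finset.card_le_card
    intro j hj
    rw [Finset.mem_filter] at hj ⊢
    exact ⟨hj.1, lt_of_le_of_lt hj.2 h⟩
  have hrank_lt : ∀ (c : α) j j', 1 ≤ j' → j < j' → L j' = c → rankL L c j < rankL L c j' := by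
    intro c j j' h1 hlt hc
    apply Finset.card_lt_card
    refine (Finset.ssubset_iff_of_subset
      (Finset.filter_subset_filter _ (Finset.Icc_subset_Icc_right hlt.le))).2 ?_
    refine ⟨j', Finset.mem_filter.2 ⟨Finset.mem_Icc.2 ⟨h1, le_rfl⟩, hc⟩, ?_⟩
    intro hcon
    rw [Finset.mem_filter, Finset.mem_Icc] at hcon
    omega
  have hLF_ne : ∀ j j', 1 ≤ j → j' ≤ n → j < j' → LF L n j ≠ LF L n j' := by
    intro j j' hj1 hj'2 hlt
    have hj2 : j ≤ n := by omega
    have hj'1 : 1 ≤ j' := by omega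
    rcases lt_trichotomy (L j) (L j') with h | h | h
    · have h1 : LF L n j ≤ Cc L n (L j) + rankL L (L j) n := by
        unfold LF
        have := hrank_mono (L j) j n hj2
        omega
      have h2 := hCc_le (L j) (L j') h
      have h3 : Cc L n (L j') < LF L n j' := by
        unfold LF
        have := hrank_pos j' hj'1
        omega
      omega
    · have h4 := hrank_lt (L j') j j' hj'1 hlt rfl
      unfold LF
      rw [h]
      omega
    · have h1 : LF L n j' ≤ Cc L n (L j') + rankL L (L j') n := by
        unfold LF
        have := hrank_mono (L j') j' n hj'2
        omega
      have h2 := hCc_le (L j') (L j) h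
      have h3 : Cc L n (L j) < LF L n j := by
        unfold LF
        have := hrank_pos j hj1
        omega
      omega
  have hLF_surj : ∀ k, 1 ≤ k → k ≤ n → ∃ j, 1 ≤ j ∧ j ≤ n ∧ LF L n j = k := by
    intro k h1 h2
    have hs := Finset.surj_on_of_inj_on_of_card_le (s := Finset.Icc 1 n) (t := Finset.Icc 1 n)
      (fun a _ => LF L n a)
      (by
        intro a ha
        rw [Finset.mem_Icc] at ha ⊢
        exact ⟨hLF_pos a ha.1, hLF_le a ha.1 ha.2⟩)
      (by
        intro a b ha hb hab
        rw [Finset.mem_Icc] at ha hb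
        by_contra hne
        rcases lt_or_gt_of_ne hne with h | h
        · exact hLF_ne a b ha.1 hb.2 h hab
        · exact hLF_ne b a hb.1 ha.2 h hab.symm)
      le_rfl k (Finset.mem_Icc.2 ⟨h1, h2⟩)
    obtain ⟨a, ha, hk⟩ := hs
    rw [Finset.mem_Icc] at ha
    exact ⟨a, ha.1, ha.2, hk.symm⟩
  have hLF_succ : ∀ j, 1 ≤ j → L (j + 1) = L j → LF L n (j + 1) = LF L n j + 1 := by
    intro j h1 hL1
    have hins : Finset.Icc 1 (j + 1) = insert (j + 1) (Finset.Icc 1 j) := by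
      ext a
      simp only [Finset.mem_Icc, Finset.mem_insert]
      omega
    have hrk : rankL L (L j) (j + 1) = rankL L (L j) j + 1 := by
      unfold rankL
      rw [hins, Finset.filter_insert, if_pos hL1, Finset.card_insert_of_notMem]
      intro h
      rw [Finset.mem_filter, Finset.mem_Icc] at h
      omega
    unfold LF
    rw [hL1, hrk]
    omega
  -- run structure
  have hp_mono : ∀ m, 1 ≤ m → ∀ m', m ≤ m' → m' ≤ r + 1 → p m ≤ p m' := by
    intro m h1 m' h2
    induction m', h2 using Nat.le_induction with
    | base => intro _; exact le_rfl
    | succ k hk ih =>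
      intro h3
      have hkr : k ≤ r := by omega
      have h1k : 1 ≤ k := by omega
      have h4 := ih (by omega)
      rw [hpsucc k h1k hkr]
      have := hlen k h1k hkr
      omega
  have hp_bounds : ∀ m, 1 ≤ m → m ≤ r → 1 ≤ p m ∧ p m ≤ n := by
    intro m h1 h2
    constructor
    · have := hp_mono 1 le_rfl m h1 (by omega)
      omega
    · have h3 := hp_mono (m + 1) (by omega) (r + 1) (by omega) le_rfl
      have h4 := hpsucc m h1 h2
      have h5 := hlen m h1 h2
      omega
  have hcover : ∀ j, 1 ≤ j → j ≤ n → ∃ m, 1 ≤ m ∧ m ≤ r ∧ p m ≤ j ∧ j < p (m + 1) := by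
    intro j h1 h2
    have hne : ((Finset.Icc 1 r).filter (fun m => p m ≤ j)).Nonempty :=
      ⟨1, Finset.mem_filter.2 ⟨Finset.mem_Icc.2 ⟨le_rfl, hr⟩, by omega⟩⟩
    obtain ⟨m, hmS, hmax⟩ :
        ∃ m ∈ (Finset.Icc 1 r).filter (fun m => p m ≤ j),
          ∀ m' ∈ (Finset.Icc 1 r).filter (fun m => p m ≤ j), m' ≤ m :=
      ⟨_, Finset.max'_mem _ hne, fun m' hm' => Finset.le_max' _ _ hm'⟩
    rw [Finset.mem_filter, Finset.mem_Icc] at hmS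
    refine ⟨m, hmS.1.1, hmS.1.2, hmS.2, ?_⟩
    by_contra hcon
    push_neg at hcon
    have hmr : m < r := by
      rcases eq_or_lt_of_le hmS.1.2 with h | h
      · rw [h] at hcon
        omega
      · exact h
    have hmem : m + 1 ∈ (Finset.Icc 1 r).filter (fun m => p m ≤ j) :=
      Finset.mem_filter.2 ⟨Finset.mem_Icc.2 ⟨by omega, hmr⟩, hcon⟩
    have := hmax (m + 1) hmem
    omega
  have hLF_run : ∀ m, 1 ≤ m → m ≤ r → ∀ j, p m ≤ j → j < p (m + 1) →
      LF L n j = LF L n (p m) + (j - p m) := by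
    intro m h1 h2 j hj1 hj2
    obtain ⟨d, rfl⟩ : ∃ d, j = p m + d := ⟨j - p m, by omega⟩
    clear hj1
    induction d with
    | zero => simp
    | succ k ih =>
      have hlt : p m + k < p (m + 1) := by omega
      have h3 : L (p m + k + 1) = L (p m + k) := by
        rw [hrunconst m h1 h2 (p m + k + 1) (by omega) (by omega),
          hrunconst m h1 h2 (p m + k) (by omega) hlt]
      have hpm1 := (hp_bounds m h1 h2).1
      have h4 := hLF_succ (p m + k) (by omega) h3
      have h5 := ih hlt
      rw [show p m + (k + 1) = (p m + k) + 1 by omega, h4, h5]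
      omega
  -- first character of the suffix at LF j equals L j
  have hfirst : ∀ j, 1 ≤ j → j ≤ n → T (SA (LF L n j)) = L j := by
    intro j h1 h2
    have hk1 : 1 ≤ LF L n j := hLF_pos j h1
    have hkn : LF L n j ≤ n := hLF_le j h1 h2
    have hkdef : LF L n j = Cc L n (L j) + rankL L (L j) j := rfl
    have hrkpos := hrank_pos j h1
    have hrkn := hrank_mono (L j) j n h2
    rcases lt_trichotomy (T (SA (LF L n j))) (L j) with hlt | heq | hgt
    · exfalso
      have hsub : Finset.Icc 1 (LF L n j) ⊆
          (Finset.Icc 1 n).filter (fun i => T (SA i) < L j) := by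
        intro i hi
        rw [Finset.mem_Icc] at hi
        refine Finset.mem_filter.2 ⟨Finset.mem_Icc.2 ⟨hi.1, le_trans hi.2 hkn⟩, ?_⟩
        exact lt_of_le_of_lt (hmono i (LF L n j) hi.1 hi.2 hkn) hlt
      have hc1 := Finset.card_le_card hsub
      rw [Nat.card_Icc] at hc1
      have hc2 : ((Finset.Icc 1 n).filter (fun i => T (SA i) < L j)).card = Cc L n (L j) := by
        rw [hL_lt]
        exact card_filter_comp hSAbij (fun k => T k < L j)
      omega
    · exact heq
    · exfalso
      have hsub : (Finset.Icc 1 n).filter (fun i => T (SA i) ≤ L j) ⊆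
          Finset.Icc 1 (LF L n j - 1) := by
        intro i hi
        rw [Finset.mem_filter, Finset.mem_Icc] at hi
        rw [Finset.mem_Icc]
        refine ⟨hi.1.1, ?_⟩
        by_contra hcon
        push_neg at hcon
        have hge : LF L n j ≤ i := by omega
        have := hmono (LF L n j) i hk1 hge hi.1.2
        exact absurd (le_trans this hi.2) (not_le.2 hgt)
      have hc1 := Finset.card_le_card hsub
      rw [Nat.card_Icc] at hc1
      have hc2 : ((Finset.Icc 1 n).filter (fun i => T (SA i) ≤ L j)).card =
          Cc L n (L j) + rankL L (L j) n := by
        rw [← hL_le]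
        exact card_filter_comp hSAbij (fun k => T k ≤ L j)
      omega
  -- Z facts
  have hXmem : ∀ i, 1 ≤ i → i ≤ r → 1 ≤ X i ∧ X i ≤ r := by
    intro i h1 h2
    have := hXbij.mapsTo (Set.mem_Icc.2 ⟨h1, h2⟩)
    simpa [Set.mem_Icc] using this
  have hZ_pos : ∀ i, 1 ≤ i → i ≤ r → 1 ≤ Z i := by
    intro i h1 h2
    rw [hZ i h1 h2]
    exact hLF_pos _ (hp_bounds _ (hXmem i h1 h2).1 (hXmem i h1 h2).2).1
  have hZ_le : ∀ i, 1 ≤ i → i ≤ r → Z i ≤ n := by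
    intro i h1 h2
    rw [hZ i h1 h2]
    obtain ⟨hx1, hx2⟩ := hXmem i h1 h2
    obtain ⟨hpa, hpb⟩ := hp_bounds _ hx1 hx2
    exact hLF_le _ hpa hpb
  have hZ_mono : ∀ i i', 1 ≤ i → i ≤ i' → i' ≤ r → Z i ≤ Z i' := by
    intro i i' h1 h2 h3
    rcases eq_or_lt_of_le h2 with h | h
    · rw [h]
    · rw [hZ i h1 (by omega), hZ i' (by omega) h3]
      exact (hXsorted i i' h1 h h3).le
  -- main statement for single characters
  have main : ∀ (c : α) (b e : ℕ), SAIv T SA n [c] = Set.Icc b e → b ≤ e →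
      ¬ CaseA Z r b e := by
    intro c b e hIv hbe hA
    obtain ⟨i, hi1, hir, hZib, heZ⟩ := hA
    have hbI : b ∈ SAIv T SA n [c] := by
      rw [hIv]; exact Set.mem_Icc.2 ⟨le_rfl, hbe⟩
    have heI : e ∈ SAIv T SA n [c] := by
      rw [hIv]; exact Set.mem_Icc.2 ⟨hbe, le_rfl⟩
    obtain ⟨hb1, hbn, hbp⟩ := hbI
    obtain ⟨he1, hen, hep⟩ := heI
    have hfb : T (SA b) = c := (hprefix_iff b c hb1 hbn).1 hbp
    have hfe : T (SA e) = c := (hprefix_iff e c he1 hen).1 hep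
    -- e + 1 ≤ n
    have hZi1n : Z (i + 1) ≤ n + 1 := by
      rcases eq_or_lt_of_le hir with h | h
      · rw [h, hZend]
      · have := hZ_le (i + 1) (by omega) h
        omega
    have he1n : e + 1 ≤ n := by omega
    -- find the run whose LF-image contains e+1
    obtain ⟨j', hj'1, hj'n, hj'LF⟩ := hLF_surj (e + 1) (by omega) he1n
    obtain ⟨m', hm'1, hm'r, hpm'le, hltp⟩ := hcover j' hj'1 hj'n
    have hLj' : L j' = L (p m') := hrunconst m' hm'1 hm'r j' hpm'le hltp
    have hLFj' : LF L n j' = LF L n (p m') + (j' - p m') := hLF_run m' hm'1 hm'r j' hpm'le hltp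
    obtain ⟨i'', hi''mem, hXi''⟩ := hXbij.surjOn (Set.mem_Icc.2 ⟨hm'1, hm'r⟩)
    rw [Set.mem_Icc] at hi''mem
    have hZi'' : Z i'' = LF L n (p m') := by
      rw [hZ i'' hi''mem.1 hi''mem.2, hXi'']
    have hZi''le : Z i'' ≤ e + 1 := by
      rw [hZi'']
      omega
    have hi''le : i'' ≤ i := by
      by_contra hcon
      push_neg at hcon
      have hi1r : i + 1 ≤ r := by omega
      have hle : Z (i + 1) ≤ Z i'' := hZ_mono (i + 1) i'' (by omega) hcon hi''mem.2
      omega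
    have hZi''b : Z i'' < b := lt_of_le_of_lt (hZ_mono i'' i hi''mem.1 hi''le hir) hZib
    have hZi''1 : 1 ≤ Z i'' := hZ_pos i'' hi''mem.1 hi''mem.2
    -- first characters
    obtain ⟨hpm'a, hpm'b⟩ := hp_bounds m' hm'1 hm'r
    have hf1 : T (SA (Z i'')) = L (p m') := by
      rw [hZi'']
      exact hfirst (p m') hpm'a hpm'b
    have hf2 : T (SA (e + 1)) = L (p m') := by
      rw [← hj'LF, hfirst j' hj'1 hj'n, hLj']
    have hle1 : T (SA (e + 1)) ≤ c := by
      rw [hf2, ← hf1, ← hfb]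
      exact hmono (Z i'') b hZi''1 hZi''b.le hbn
    have hge1 : c ≤ T (SA (e + 1)) := by
      rw [← hfe]
      exact hmono e (e + 1) he1 (by omega) he1n
    have hmemI : e + 1 ∈ SAIv T SA n [c] :=
      ⟨by omega, he1n, (hprefix_iff (e + 1) c (by omega) he1n).2 (le_antisymm hle1 hge1)⟩
    rw [hIv, Set.mem_Icc] at hmemI
    omega
  refine ⟨main, ?_⟩
  intro P x b e hP hx1 hxn hsub hIv hbe hA
  by_contra hcon
  push_neg at hcon
  have hlen1 : P.length = 1 := by
    have := List.length_pos_iff.2 hP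
    omega
  have hPeq : P = [T x] := by
    rw [hsub, hlen1]
    simp [substr]
  rw [hPeq] at hIv
  exact main (T x) b e hIv hbe hA
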